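/- (Lemma 4.1.) Fix an integer n ≥ 1 and a constant c > 0. Let Θ : [0,∞) → [0,∞) be a nonincreasing function with Θ(λ) → 0 as λ → ∞, satisfying ∫_1^∞ Θ(t) t^{−1} dt = ∞ and Θ(λ) ≥ c λ^{−1/2} for all λ ≥ 1. Then there exist a constant C > 0 and an integer m₀ ≥ 1 such that for all m ≥ m₀, the quantity A_m = ∫_0^∞ λ^{m+n} e^{−λΘ(λ)} dλ is finite and satisfies A_m ≤ C·(2m/Θ(m⁴))^m. -/

import Mathlib

open MeasureTheory Set Filter
open scoped ENNReal Topology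

lemma aux_fact (m n : ℕ) (hm : 1 ≤ m) :
    (Nat.factorial (m + n) : ℝ) ≤ (m : ℝ) ^ (m + n) * Real.exp ((n : ℝ) + (n : ℝ) ^ 2) := by
  have hmR : (1 : ℝ) ≤ (m : ℝ) := by exact_mod_cast hm
  have hm0 : (0 : ℝ) < (m : ℝ) := lt_of_lt_of_le one_pos hmR
  have h1 : (Nat.factorial (m + n) : ℝ) ≤ ((m + n : ℕ) : ℝ) ^ (m + n) := by
    exact_mod_cast Nat.factorial_le_pow _
  have h2 : ((m + n : ℕ) : ℝ) = (m : ℝ) * (1 + (n : ℝ) / (m : ℝ)) := by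
    push_cast; field_simp
  have h4 : (1 + (n : ℝ) / (m : ℝ)) ≤ Real.exp ((n : ℝ) / (m : ℝ)) := by
    have := Real.add_one_le_exp ((n : ℝ) / (m : ℝ)); linarith
  have h5 : (1 + (n : ℝ) / (m : ℝ)) ^ (m + n) ≤ Real.exp ((n : ℝ) / (m : ℝ)) ^ (m + n) :=
    pow_le_pow_left₀ (by positivity) h4 _
  have h7 : ((m + n : ℕ) : ℝ) * ((n : ℝ) / (m : ℝ)) ≤ (n : ℝ) + (n : ℝ) ^ 2 := by
    have e : ((m + n : ℕ) : ℝ) * ((n : ℝ) / (m : ℝ)) = (n : ℝ) + (n : ℝ) ^ 2 / (m : ℝ) := by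
      push_cast; field_simp
    rw [e]
    have : (n : ℝ) ^ 2 / (m : ℝ) ≤ (n : ℝ) ^ 2 := by
      apply div_le_self (by positivity) hmR
    linarith
  calc (Nat.factorial (m + n) : ℝ) ≤ ((m + n : ℕ) : ℝ) ^ (m + n) := h1
    _ = (m : ℝ) ^ (m + n) * (1 + (n : ℝ) / (m : ℝ)) ^ (m + n) := by rw [h2, mul_pow]
    _ ≤ (m : ℝ) ^ (m + n) * Real.exp ((n : ℝ) / (m : ℝ)) ^ (m + n) := by
        exact mul_le_mul_of_nonneg_left h5 (by positivity)
    _ = (m : ℝ) ^ (m + n) * Real.exp (((m + n : ℕ) : ℝ) * ((n : ℝ) / (m : ℝ))) := by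
        rw [← Real.exp_nat_mul]
    _ ≤ (m : ℝ) ^ (m + n) * Real.exp ((n : ℝ) + (n : ℝ) ^ 2) := by
        exact mul_le_mul_of_nonneg_left (Real.exp_le_exp.mpr h7) (by positivity)

lemma aux_tail (m n : ℕ) (c : ℝ) (hc : 0 < c) (Θ : ℝ → ℝ)
    (hlow : ∀ x : ℝ, 1 ≤ x → c * x ^ (-(1 : ℝ) / 2) ≤ Θ x)
    (hmn2 : n + 2 ≤ m) (hm16 : (16 / c) ^ 2 ≤ (m : ℝ)) (lam : ℝ)
    (hlam : (m : ℝ) ^ 4 ≤ lam) :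
    lam ^ (m + n) * Real.exp (-(lam * Θ lam)) ≤ lam ^ (-2 : ℝ) := by
  set k : ℕ := m + n + 2 with hk_def
  have hmR : (1 : ℝ) ≤ (m : ℝ) := by exact_mod_cast Nat.one_le_iff_ne_zero.mpr (by omega)
  have hM1 : (1 : ℝ) ≤ (m : ℝ) ^ 4 := one_le_pow₀ hmR
  have hlam1 : (1 : ℝ) ≤ lam := hM1.trans hlam
  have hlam0 : (0 : ℝ) < lam := lt_of_lt_of_le one_pos hlam1
  set s : ℝ := lam ^ ((1 : ℝ) / 2) with hs_def
  have hs0 : 0 < s := Real.rpow_pos_of_pos hlam0 _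
  have hss : s * s = lam := by
    rw [hs_def, ← Real.rpow_add hlam0]; norm_num
  have hls : lam * lam ^ (-(1 : ℝ) / 2) = s := by
    nth_rewrite 1 [← Real.rpow_one lam]
    rw [← Real.rpow_add hlam0]; norm_num
    exact hs_def.symm
  have hcs : c * s ≤ lam * Θ lam := by
    have h1 := hlow lam hlam1
    calc c * s = lam * (c * lam ^ (-(1 : ℝ) / 2)) := by rw [← hls]; ring
      _ ≤ lam * Θ lam := mul_le_mul_of_nonneg_left h1 hlam0.le
  -- factorial bound
  have h8k : ((8 * k : ℕ) : ℝ) ^ 8 ≤ c ^ 8 * (m : ℝ) ^ 12 := by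
    have hkm : (8 * k : ℕ) ≤ 16 * m := by omega
    have h1 : ((8 * k : ℕ) : ℝ) ≤ 16 * (m : ℝ) := by exact_mod_cast hkm
    have h2 : ((8 * k : ℕ) : ℝ) ^ 8 ≤ (16 * (m : ℝ)) ^ 8 :=
      pow_le_pow_left₀ (by positivity) h1 8
    have h3 : ((16 / c) ^ 2) ^ 4 ≤ ((m : ℝ)) ^ 4 := pow_le_pow_left₀ (by positivity) hm16 4
    have h3' : (16 / c : ℝ) ^ 8 ≤ (m : ℝ) ^ 4 := by rw [← pow_mul] at h3; norm_num at h3; exact h3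
    have h4 : (16 : ℝ) ^ 8 ≤ c ^ 8 * (m : ℝ) ^ 4 := by
      rw [div_pow] at h3'
      calc (16 : ℝ) ^ 8 = (16 : ℝ) ^ 8 / c ^ 8 * c ^ 8 := by field_simp
        _ ≤ (m : ℝ) ^ 4 * c ^ 8 := mul_le_mul_of_nonneg_right h3' (by positivity)
        _ = c ^ 8 * (m : ℝ) ^ 4 := mul_comm _ _
    calc ((8 * k : ℕ) : ℝ) ^ 8 ≤ (16 * (m : ℝ)) ^ 8 := h2
      _ = 16 ^ 8 * (m : ℝ) ^ 8 := by rw [mul_pow]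
      _ ≤ (c ^ 8 * (m : ℝ) ^ 4) * (m : ℝ) ^ 8 := mul_le_mul_of_nonneg_right h4 (by positivity)
      _ = c ^ 8 * (m : ℝ) ^ 12 := by ring
  have hfact : (Nat.factorial (8 * k) : ℝ) ≤ c ^ (8 * k) * lam ^ (3 * k) := by
    calc (Nat.factorial (8 * k) : ℝ) ≤ ((8 * k : ℕ) : ℝ) ^ (8 * k) := by
          exact_mod_cast Nat.factorial_le_pow _
      _ = (((8 * k : ℕ) : ℝ) ^ 8) ^ k := by rw [← pow_mul]
      _ ≤ (c ^ 8 * (m : ℝ) ^ 12) ^ k := pow_le_pow_left₀ (by positivity) h8k k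
      _ = c ^ (8 * k) * ((m : ℝ) ^ 4) ^ (3 * k) := by
          rw [mul_pow, ← pow_mul, ← pow_mul]
          congr 1
          ring
      _ ≤ c ^ (8 * k) * lam ^ (3 * k) := by
          exact mul_le_mul_of_nonneg_left (pow_le_pow_left₀ (by positivity) hlam _)
            (by positivity)
  have hkey : lam ^ k ≤ Real.exp (c * s) := by
    have hexp := Real.pow_div_factorial_le_exp (c * s) (by positivity) (8 * k)
    have hs8 : s ^ (8 * k) = lam ^ (4 * k) := by
      rw [show 8 * k = 2 * (4 * k) by ring, pow_mul, sq, hss]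
    have hpow : lam ^ k * (Nat.factorial (8 * k) : ℝ) ≤ (c * s) ^ (8 * k) := by
      rw [mul_pow, hs8]
      calc lam ^ k * (Nat.factorial (8 * k) : ℝ)
          ≤ lam ^ k * (c ^ (8 * k) * lam ^ (3 * k)) :=
            mul_le_mul_of_nonneg_left hfact (by positivity)
        _ = c ^ (8 * k) * lam ^ (4 * k) := by ring
    have h := (le_div_iff₀ (by positivity : (0:ℝ) < (Nat.factorial (8 * k) : ℝ))).mpr hpow
    exact h.trans hexp
  have hlog : lam ^ (m + n) * Real.exp (-(lam * Θ lam)) ≤ lam ^ (m + n) * Real.exp (-(c * s)) :=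
    mul_le_mul_of_nonneg_left (Real.exp_le_exp.mpr (by linarith)) (by positivity)
  have h2 : lam ^ (m + n) * Real.exp (-(c * s)) ≤ lam ^ (-2 : ℝ) := by
    have hrp : lam ^ (-2 : ℝ) = (lam ^ 2)⁻¹ := by
      rw [show (-2 : ℝ) = -((2:ℕ):ℝ) by norm_num, Real.rpow_neg hlam0.le, Real.rpow_natCast]
    have hk' : lam ^ (m + n) * lam ^ 2 = lam ^ k := by rw [← pow_add]
    have hdiv : lam ^ (m + n) ≤ Real.exp (c * s) / lam ^ 2 := by
      rw [le_div_iff₀ (by positivity)]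
      rw [hk']; exact hkey
    rw [hrp, Real.exp_neg]
    calc lam ^ (m + n) * (Real.exp (c * s))⁻¹
        ≤ (Real.exp (c * s) / lam ^ 2) * (Real.exp (c * s))⁻¹ :=
          mul_le_mul_of_nonneg_right hdiv (by positivity)
      _ = (lam ^ 2)⁻¹ := by field_simp [mul_comm]
  exact hlog.trans h2

lemma aux_gamma_int (j : ℕ) (θ : ℝ) (hθ : 0 < θ) :
    IntegrableOn (fun lam : ℝ => lam ^ j * Real.exp (-(θ * lam))) (Ioi (0 : ℝ)) volume := by
  have h := integrableOn_rpow_mul_exp_neg_mul_rpow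
    (s := ((j : ℕ) : ℝ)) (p := 1) (b := θ)
    (lt_of_lt_of_le neg_one_lt_zero (Nat.cast_nonneg _)) one_pos hθ
  refine h.congr_fun (fun x hx => ?_) measurableSet_Ioi
  beta_reduce
  rw [Real.rpow_one, Real.rpow_natCast, neg_mul]

lemma aux_gamma_val (j : ℕ) (θ : ℝ) (hθ : 0 < θ) :
    ∫ lam in Ioi (0 : ℝ), lam ^ j * Real.exp (-(θ * lam))
      = (1 / θ) ^ (j + 1) * (Nat.factorial j : ℝ) := by
  have h := Real.integral_rpow_mul_exp_neg_mul_Ioi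
    (a := ((j : ℕ) : ℝ) + 1) (by positivity) hθ
  rw [show ((j : ℕ) : ℝ) + 1 - 1 = ((j : ℕ) : ℝ) by ring] at h
  rw [Real.Gamma_nat_eq_factorial] at h
  rw [show ((j : ℕ) : ℝ) + 1 = ((j + 1 : ℕ) : ℝ) by push_cast; ring,
    Real.rpow_natCast] at h
  rw [← h]
  refine setIntegral_congr_fun measurableSet_Ioi (fun x hx => ?_)
  rw [Real.rpow_natCast]

lemma aux_m0 (K : ℕ) : ∃ m₁ : ℕ, ∀ m : ℕ, m₁ ≤ m → ((m : ℝ)) ^ K ≤ 2 ^ m := by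
  have h := tendsto_pow_const_div_const_pow_of_one_lt K (one_lt_two (α := ℝ))
  obtain ⟨m₁, hm₁⟩ := eventually_atTop.mp (h.eventually_lt_const one_pos)
  refine ⟨m₁, fun m hm => ?_⟩
  have h2 := hm₁ m hm
  have hp : (0 : ℝ) < 2 ^ m := by positivity
  rw [div_lt_one hp] at h2
  exact h2.le

-- final arithmetic lemma
lemma aux_arith (m n : ℕ) (c θ : ℝ) (hc : 0 < c) (hθpos : 0 < θ) (hθ1 : θ ≤ 1)
    (hm : 1 ≤ m) (hθinv : 1 / θ ≤ (m : ℝ) ^ 2 / c)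
    (hfac : (Nat.factorial (m + n) : ℝ) ≤ (m : ℝ) ^ (m + n) * Real.exp ((n : ℝ) + (n : ℝ) ^ 2))
    (hm2 : ((m : ℝ)) ^ (3 * n + 2) ≤ 2 ^ m) :
    (1 / θ) ^ (m + n + 1) * (Nat.factorial (m + n) : ℝ) + 1
      ≤ (Real.exp ((n : ℝ) + (n : ℝ) ^ 2) * (1 / c) ^ (n + 1) + 1) * (2 * (m : ℝ) / θ) ^ m := by
  have hmR : (1 : ℝ) ≤ (m : ℝ) := by exact_mod_cast hm
  have hm0 : (0 : ℝ) < (m : ℝ) := lt_of_lt_of_le one_pos hmR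
  have hθinv0 : (0 : ℝ) < 1 / θ := by positivity
  have e1 : (2 * (m : ℝ) / θ) ^ m = 2 ^ m * ((m : ℝ) ^ m * (1 / θ) ^ m) := by
    rw [show 2 * (m : ℝ) / θ = 2 * ((m : ℝ) * (1 / θ)) by ring, mul_pow, mul_pow]
  have hone : (1 : ℝ) ≤ (2 * (m : ℝ) / θ) ^ m := by
    have hb : (1 : ℝ) ≤ 2 * (m : ℝ) / θ := by
      rw [le_div_iff₀ hθpos]; nlinarith
    calc (1 : ℝ) = 1 ^ m := (one_pow m).symm
      _ ≤ (2 * (m : ℝ) / θ) ^ m := pow_le_pow_left₀ zero_le_one hb m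
  have hsplitθ : (1 / θ) ^ (m + n + 1) = (1 / θ) ^ m * (1 / θ) ^ (n + 1) := by
    rw [← pow_add, show m + (n + 1) = m + n + 1 by ring]
  have hθn : (1 / θ) ^ (n + 1) ≤ ((m : ℝ) ^ 2 / c) ^ (n + 1) :=
    pow_le_pow_left₀ (by positivity) hθinv _
  have key : (1 / θ) ^ (m + n + 1) * (Nat.factorial (m + n) : ℝ)
      ≤ Real.exp ((n : ℝ) + (n : ℝ) ^ 2) * (1 / c) ^ (n + 1) * (2 * (m : ℝ) / θ) ^ m := by
    calc (1 / θ) ^ (m + n + 1) * (Nat.factorial (m + n) : ℝ)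
        ≤ ((1 / θ) ^ m * ((m : ℝ) ^ 2 / c) ^ (n + 1))
            * ((m : ℝ) ^ (m + n) * Real.exp ((n : ℝ) + (n : ℝ) ^ 2)) := by
          rw [hsplitθ]
          apply mul_le_mul _ hfac (by positivity) (by positivity)
          exact mul_le_mul_of_nonneg_left hθn (by positivity)
      _ = Real.exp ((n : ℝ) + (n : ℝ) ^ 2) * (1 / c) ^ (n + 1)
            * ((m : ℝ) ^ (3 * n + 2) * ((m : ℝ) ^ m * (1 / θ) ^ m)) := by
          field_simp
          ring
      _ ≤ Real.exp ((n : ℝ) + (n : ℝ) ^ 2) * (1 / c) ^ (n + 1)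
            * ((2 : ℝ) ^ m * ((m : ℝ) ^ m * (1 / θ) ^ m)) := by
          apply mul_le_mul_of_nonneg_left _ (by positivity)
          exact mul_le_mul_of_nonneg_right hm2 (by positivity)
      _ = Real.exp ((n : ℝ) + (n : ℝ) ^ 2) * (1 / c) ^ (n + 1) * (2 * (m : ℝ) / θ) ^ m := by
          rw [e1]
  calc (1 / θ) ^ (m + n + 1) * (Nat.factorial (m + n) : ℝ) + 1
      ≤ Real.exp ((n : ℝ) + (n : ℝ) ^ 2) * (1 / c) ^ (n + 1) * (2 * (m : ℝ) / θ) ^ m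
        + 1 * (2 * (m : ℝ) / θ) ^ m := by
        refine add_le_add key ?_
        rw [one_mul]; exact hone
    _ = (Real.exp ((n : ℝ) + (n : ℝ) ^ 2) * (1 / c) ^ (n + 1) + 1) * (2 * (m : ℝ) / θ) ^ m := by
        ring

/-- **Lemma 4.1.** Fix an integer `n ≥ 1` and `c > 0`. Let `Θ : [0,∞) → [0,∞)` be
nonincreasing with `Θ(λ) → 0` as `λ → ∞`, with `∫_1^∞ Θ(t)/t dt = ∞` and
`Θ(λ) ≥ c λ^{-1/2}` for `λ ≥ 1`. Then there are `C > 0` and `m₀ ≥ 1` such that for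
all `m ≥ m₀` the integral `A_m = ∫_0^∞ λ^{m+n} e^{-λΘ(λ)} dλ` is finite and
`A_m ≤ C (2m/Θ(m⁴))^m`. -/
theorem lemma_4_1 (n : ℕ) (hn : 1 ≤ n) (c : ℝ) (hc : 0 < c) (Θ : ℝ → ℝ)
    (hΘ0 : ∀ x : ℝ, 0 ≤ x → 0 ≤ Θ x)
    (hmono : AntitoneOn Θ (Ici (0 : ℝ)))
    (hlim : Tendsto Θ atTop (𝓝 0))
    (hdiv : ∫⁻ t in Ici (1 : ℝ), ENNReal.ofReal (Θ t / t) = ∞)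
    (hlow : ∀ x : ℝ, 1 ≤ x → c * x ^ (-(1 : ℝ) / 2) ≤ Θ x) :
    ∃ C : ℝ, 0 < C ∧ ∃ m₀ : ℕ, 1 ≤ m₀ ∧ ∀ m : ℕ, m₀ ≤ m →
      IntegrableOn (fun lam : ℝ => lam ^ (m + n) * Real.exp (-(lam * Θ lam)))
        (Ioi (0 : ℝ)) volume ∧
      (∫ lam in Ioi (0 : ℝ), lam ^ (m + n) * Real.exp (-(lam * Θ lam)))
        ≤ C * (2 * (m : ℝ) / Θ ((m : ℝ) ^ 4)) ^ m := by
  classical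
  have hg_anti : Antitone (fun x : ℝ => Θ (max x 0)) := fun x y hxy =>
    hmono (le_max_right x 0) (le_max_right y 0) (max_le_max hxy le_rfl)
  have hg_meas : Measurable (fun x : ℝ => Θ (max x 0)) := hg_anti.measurable
  obtain ⟨N, hN⟩ : ∃ N : ℝ, ∀ x ≥ N, Θ x < 1 :=
    eventually_atTop.mp (hlim.eventually_lt_const one_pos)
  obtain ⟨m₁, hm₁⟩ := aux_m0 (3 * n + 2)
  refine ⟨Real.exp ((n : ℝ) + (n : ℝ) ^ 2) * (1 / c) ^ (n + 1) + 1, by positivity,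
    max (max (n + 2) m₁) (max (⌈(16 / c) ^ 2⌉₊) ⌈N⌉₊) + 1,
    Nat.le_add_left 1 _, ?_⟩
  intro m hm
  have hmn2 : n + 2 ≤ m := by omega
  have hm1 : 1 ≤ m := by omega
  have hmm₁ : m₁ ≤ m := by omega
  have hceil16 : ⌈(16 / c) ^ 2⌉₊ ≤ m := by omega
  have hceilN : ⌈N⌉₊ ≤ m := by omega
  have hm16 : (16 / c) ^ 2 ≤ (m : ℝ) := (Nat.le_ceil _).trans (by exact_mod_cast hceil16)
  have hmN : N ≤ (m : ℝ) := (Nat.le_ceil _).trans (by exact_mod_cast hceilN)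
  have hm2 : ((m : ℝ)) ^ (3 * n + 2) ≤ 2 ^ m := hm₁ m hmm₁
  have hmR : (1 : ℝ) ≤ (m : ℝ) := by exact_mod_cast hm1
  have hm0R : (0 : ℝ) < (m : ℝ) := lt_of_lt_of_le one_pos hmR
  set M : ℝ := (m : ℝ) ^ 4 with hM_def
  have hM1 : (1 : ℝ) ≤ M := one_le_pow₀ hmR
  have hM0 : (0 : ℝ) < M := lt_of_lt_of_le one_pos hM1
  have hmM : (m : ℝ) ≤ M := by
    rw [hM_def]
    calc (m : ℝ) = (m : ℝ) ^ 1 := (pow_one _).symm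
      _ ≤ (m : ℝ) ^ 4 := pow_le_pow_right₀ hmR (by norm_num)
  set θ : ℝ := Θ M with hθ_def
  have hθlow : c / (m : ℝ) ^ 2 ≤ θ := by
    have h1 := hlow M hM1
    have h2 : M ^ (-(1 : ℝ) / 2) = ((m : ℝ) ^ 2)⁻¹ := by
      rw [show M = ((m : ℝ) ^ 2) ^ (2 : ℕ) by rw [hM_def]; ring,
        ← Real.rpow_natCast ((m : ℝ) ^ 2) 2, ← Real.rpow_mul (by positivity)]
      norm_num [Real.rpow_neg_one]
    rw [h2] at h1
    rwa [div_eq_mul_inv]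
  have hθpos : 0 < θ := lt_of_lt_of_le (by positivity) hθlow
  have hθ1 : θ ≤ 1 := (hN M (hmN.trans hmM)).le
  have hθinv : 1 / θ ≤ (m : ℝ) ^ 2 / c := by
    rw [div_le_div_iff₀ hθpos hc]
    have := (div_le_iff₀ (by positivity : (0 : ℝ) < (m : ℝ) ^ 2)).mp hθlow
    nlinarith
  have hfront : ∀ lam : ℝ, 0 < lam → lam ≤ M →
      lam ^ (m + n) * Real.exp (-(lam * Θ lam)) ≤ lam ^ (m + n) * Real.exp (-(θ * lam)) := by
    intro lam h0 hlM
    have hθle : θ ≤ Θ lam := hmono h0.le hM0.le hlM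
    apply mul_le_mul_of_nonneg_left _ (by positivity)
    apply Real.exp_le_exp.mpr
    nlinarith
  have hIfront := aux_gamma_int (m + n) θ hθpos
  set F : ℝ → ℝ := fun lam => lam ^ (m + n) * Real.exp (-(lam * Θ (max lam 0))) with hF_def
  have hFmeas : Measurable F := by
    apply Measurable.mul
    · exact measurable_id.pow_const _
    · exact ((measurable_id.mul hg_meas).neg).exp
  have hEq : EqOn (fun lam : ℝ => lam ^ (m + n) * Real.exp (-(lam * Θ lam))) F (Ioi 0) := by
    intro lam hlam
    simp only [hF_def, max_eq_left (le_of_lt (mem_Ioi.mp hlam))]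
  have hIF1 : IntegrableOn F (Ioc 0 M) := by
    apply Integrable.mono' (hIfront.mono_set Ioc_subset_Ioi_self) hFmeas.aestronglyMeasurable
    filter_upwards [ae_restrict_mem measurableSet_Ioc] with lam hlam
    have h0 : (0 : ℝ) < lam := hlam.1
    rw [Real.norm_eq_abs, abs_of_nonneg (by positivity)]
    have := hfront lam h0 hlam.2
    simpa [hF_def, max_eq_left h0.le] using this
  have hIF2 : IntegrableOn F (Ioi M) := by
    apply Integrable.mono' (integrableOn_Ioi_rpow_of_lt (by norm_num : (-2 : ℝ) < -1) hM0)
      hFmeas.aestronglyMeasurable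
    filter_upwards [ae_restrict_mem measurableSet_Ioi] with lam hlam
    have h0 : (0 : ℝ) < lam := lt_trans hM0 hlam
    rw [Real.norm_eq_abs, abs_of_nonneg (by positivity)]
    have := aux_tail m n c hc Θ hlow hmn2 hm16 lam (le_of_lt hlam)
    simpa [hF_def, max_eq_left h0.le] using this
  have hIF : IntegrableOn F (Ioi 0) := by
    rw [← Ioc_union_Ioi_eq_Ioi hM0.le]
    exact hIF1.union hIF2
  have hIf : IntegrableOn (fun lam : ℝ => lam ^ (m + n) * Real.exp (-(lam * Θ lam))) (Ioi 0) :=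
    hIF.congr_fun hEq.symm measurableSet_Ioi
  refine ⟨hIf, ?_⟩
  have hsplit : (∫ lam in Ioi (0 : ℝ), lam ^ (m + n) * Real.exp (-(lam * Θ lam)))
      = (∫ lam in Ioc (0 : ℝ) M, F lam) + ∫ lam in Ioi M, F lam := by
    rw [setIntegral_congr_fun measurableSet_Ioi hEq, ← Ioc_union_Ioi_eq_Ioi hM0.le,
      setIntegral_union (Ioc_disjoint_Ioi le_rfl) measurableSet_Ioi hIF1 hIF2]
  have hb1 : (∫ lam in Ioc (0 : ℝ) M, F lam)
      ≤ (1 / θ) ^ (m + n + 1) * (Nat.factorial (m + n) : ℝ) := by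
    rw [← aux_gamma_val (m + n) θ hθpos]
    have step1 : (∫ lam in Ioc (0 : ℝ) M, F lam)
        ≤ ∫ lam in Ioc (0 : ℝ) M, lam ^ (m + n) * Real.exp (-(θ * lam)) := by
      apply setIntegral_mono_on hIF1 (hIfront.mono_set Ioc_subset_Ioi_self) measurableSet_Ioc
      intro lam hlam
      have h0 : (0 : ℝ) < lam := hlam.1
      have := hfront lam h0 hlam.2
      simpa [hF_def, max_eq_left h0.le] using this
    refine step1.trans (setIntegral_mono_set hIfront ?_ ?_)
    · filter_upwards [ae_restrict_mem measurableSet_Ioi] with lam hlam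
      have h0 : (0 : ℝ) < lam := mem_Ioi.mp hlam
      positivity
    · exact HasSubset.Subset.eventuallyLE Ioc_subset_Ioi_self
  have hb2 : (∫ lam in Ioi M, F lam) ≤ 1 := by
    have h1 : (∫ lam in Ioi M, F lam) ≤ ∫ lam in Ioi M, lam ^ (-2 : ℝ) := by
      apply setIntegral_mono_on hIF2 (integrableOn_Ioi_rpow_of_lt (by norm_num) hM0)
        measurableSet_Ioi
      intro lam hlam
      have h0 : (0 : ℝ) < lam := lt_trans hM0 hlam
      have := aux_tail m n c hc Θ hlow hmn2 hm16 lam (le_of_lt hlam)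
      simpa [hF_def, max_eq_left h0.le] using this
    have h2 : ∫ lam in Ioi M, lam ^ (-2 : ℝ) = -M ^ ((-2 : ℝ) + 1) / ((-2 : ℝ) + 1) :=
      integral_Ioi_rpow_of_lt (by norm_num) hM0
    refine h1.trans ?_
    rw [h2]
    norm_num [Real.rpow_neg_one]
    exact inv_le_one_of_one_le₀ hM1
  rw [hsplit]
  calc (∫ lam in Ioc (0 : ℝ) M, F lam) + ∫ lam in Ioi M, F lam
      ≤ (1 / θ) ^ (m + n + 1) * (Nat.factorial (m + n) : ℝ) + 1 := add_le_add hb1 hb2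
    _ ≤ _ := aux_arith m n c θ hc hθpos hθ1 hm1 hθinv (aux_fact m n hm1) hm2
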